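/- Let x, x* : [0,∞) → ℝⁿ be absolutely continuous, with x* being ℓ-Lipschitz. If ⟨x'(t), x(t) - x*(t)⟩ ≤ -a‖x(t) - x*(t)‖² holds for almost every t ≥ 0 with a > 0, then limsup_{t→∞} ‖x(t) - x*(t)‖ ≤ ℓ/a; moreover, if ‖x(0) - x*(0)‖ ≤ ℓ/a then ‖x(t) - x*(t)‖ ≤ ℓ/a for all t ≥ 0. -/

import Mathlib

open MeasureTheory Set Filter
open scoped Topology RealInnerProductSpace

section Aux
variable {E : Type*} [NormedAddCommGroup E] [InnerProductSpace ℝ E] [CompleteSpace E]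

lemma integrable_inner_primitive {f : ℝ → E} {s t : ℝ} (hf : IntegrableOn f (Icc s t)) :
    IntegrableOn (fun τ => ⟪f τ, ∫ σ in Ioc s τ, f σ⟫) (Ioc s t) := by
  have hFcont : ContinuousOn (fun τ => ∫ σ in Ioc s τ, f σ) (Icc s t) :=
    intervalIntegral.continuousOn_primitive hf
  obtain ⟨M, hM⟩ := isCompact_Icc.exists_bound_of_continuousOn hFcont
  have hmeas : AEStronglyMeasurable (fun τ => ⟪f τ, ∫ σ in Ioc s τ, f σ⟫)
      (volume.restrict (Ioc s t)) :=
    (hf.mono_set Ioc_subset_Icc_self).aestronglyMeasurable.inner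
      ((hFcont.mono Ioc_subset_Icc_self).aestronglyMeasurable measurableSet_Ioc)
  apply Integrable.mono' ((hf.mono_set Ioc_subset_Icc_self).norm.mul_const M) hmeas
  filter_upwards [ae_restrict_mem measurableSet_Ioc] with τ hτ
  calc ‖⟪f τ, ∫ σ in Ioc s τ, f σ⟫‖ ≤ ‖f τ‖ * ‖∫ σ in Ioc s τ, f σ‖ :=
        norm_inner_le_norm _ _
    _ ≤ ‖f τ‖ * M := by
        have := hM τ (Ioc_subset_Icc_self hτ)
        exact mul_le_mul_of_nonneg_left this (norm_nonneg _)

lemma fubini_half {f : ℝ → E} {s t : ℝ} (hst : s ≤ t) (hf : IntegrableOn f (Icc s t)) :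
    ∫ τ in Ioc s t, ⟪f τ, ∫ σ in Ioc s τ, f σ⟫
      = (1 / 2) * ‖∫ σ in Ioc s t, f σ‖ ^ 2 := by
  set μ := volume.restrict (Ioc s t) with hμdef
  have hfμ : Integrable f μ := hf.mono_set Ioc_subset_Icc_self
  set I := ∫ σ in Ioc s t, f σ with hIdef
  set F := fun τ => ∫ σ in Ioc s τ, f σ with hFdef
  set A := ∫ τ, ⟪f τ, F τ⟫ ∂μ with hAdef
  set B := ∫ τ, ⟪f τ, I - F τ⟫ ∂μ with hBdef
  have hAint : Integrable (fun τ => ⟪f τ, F τ⟫) μ := integrable_inner_primitive hf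
  have hIint : Integrable (fun τ => ⟪f τ, I⟫) μ := hfμ.inner_const I
  have hBint : Integrable (fun τ => ⟪f τ, I - F τ⟫) μ := by
    have h : (fun τ => ⟪f τ, I - F τ⟫) = fun τ => ⟪f τ, I⟫ - ⟪f τ, F τ⟫ := by
      funext τ; rw [inner_sub_right]
    rw [h]; exact hIint.sub hAint
  -- A + B = ‖I‖²
  have hsum : A + B = ‖I‖ ^ 2 := by
    rw [hAdef, hBdef, ← integral_add hAint hBint]
    have h : ∀ τ, ⟪f τ, F τ⟫ + ⟪f τ, I - F τ⟫ = ⟪I, f τ⟫ := fun τ => by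
      rw [← inner_add_right, add_sub_cancel, real_inner_comm]
    simp_rw [h]
    rw [integral_inner hfμ I, ← hIdef, real_inner_self_eq_norm_sq]
  -- the split of I as F τ + tail
  have htail : ∀ τ ∈ Ioc s t, I - F τ = ∫ σ in Ioc τ t, f σ := by
    intro τ hτ
    have hadd : F τ + ∫ σ in Ioc τ t, f σ = I := by
      rw [hFdef, hIdef]
      simp only
      rw [← setIntegral_union (Ioc_disjoint_Ioc_of_le le_rfl) measurableSet_Ioc
        (hf.mono_set (Ioc_subset_Icc_self.trans (Icc_subset_Icc le_rfl hτ.2)))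
        (hf.mono_set ((Ioc_subset_Icc_self).trans (Icc_subset_Icc hτ.1.le le_rfl))),
        Ioc_union_Ioc_eq_Ioc hτ.1.le hτ.2]
    rw [← hadd]; abel
  -- Fubini: A = B
  have hABeq : A = B := by
    classical
    set G : ℝ × ℝ → ℝ := fun p => ⟪f p.1, f p.2⟫ with hGdef
    have hGmeas : AEStronglyMeasurable G (μ.prod μ) :=
      hfμ.aestronglyMeasurable.comp_fst.inner hfμ.aestronglyMeasurable.comp_snd
    have hGint : Integrable G (μ.prod μ) := by
      refine Integrable.mono' (hfμ.norm.mul_prod hfμ.norm) hGmeas ?_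
      refine Eventually.of_forall fun p => ?_
      exact norm_inner_le_norm _ _
    set Φ : ℝ → ℝ → ℝ := fun τ σ => if τ < σ then ⟪f τ, f σ⟫ else 0 with hΦdef
    have hΦunc : Function.uncurry Φ = ({p : ℝ × ℝ | p.1 < p.2}).indicator G := by
      funext p
      simp only [Function.uncurry, hΦdef, Set.indicator, mem_setOf_eq, hGdef]
    have hΦint : Integrable (Function.uncurry Φ) (μ.prod μ) := by
      rw [hΦunc]
      exact hGint.indicator (measurableSet_lt measurable_fst measurable_snd)
    -- rewrite B as double integral of Φ
    have hmem : ∀ᵐ τ ∂μ, τ ∈ Ioc s t := ae_restrict_mem measurableSet_Ioc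
    have hB2 : B = ∫ τ, ∫ σ, Φ τ σ ∂μ ∂μ := by
      rw [hBdef]
      refine integral_congr_ae ?_
      filter_upwards [hmem] with τ hτ
      rw [htail τ hτ]
      have hres : volume.restrict (Ioc τ t) = μ.restrict (Ioi τ) := by
        rw [hμdef, Measure.restrict_restrict measurableSet_Ioi]
        congr 1
        ext σ
        constructor
        · intro hσ; exact ⟨hσ.1, hτ.1.trans hσ.1, hσ.2⟩
        · intro hσ; exact ⟨hσ.1, hσ.2.2⟩
      rw [← integral_inner (hf.mono_set (Ioc_subset_Icc_self.trans
        (Icc_subset_Icc hτ.1.le le_rfl))) (f τ)]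
      show (∫ σ in Ioc τ t, ⟪f τ, f σ⟫) = _
      rw [hres, ← integral_indicator measurableSet_Ioi]
      refine integral_congr_ae (Eventually.of_forall fun σ => ?_)
      simp only [Set.indicator, mem_Ioi, hΦdef]
    have hswap : (∫ τ, ∫ σ, Φ τ σ ∂μ ∂μ) = ∫ σ, ∫ τ, Φ τ σ ∂μ ∂μ :=
      integral_integral_swap hΦint
    have hA2 : (∫ σ, ∫ τ, Φ τ σ ∂μ ∂μ) = A := by
      rw [hAdef]
      refine integral_congr_ae ?_
      filter_upwards [hmem] with τ hτ
      have h1 : (fun σ => Φ σ τ) = (Iio τ).indicator (fun σ => ⟪f τ, f σ⟫) := by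
        funext σ
        simp only [hΦdef, Set.indicator, mem_Iio]
        split_ifs with h
        · exact real_inner_comm _ _
        · rfl
      show (∫ σ, Φ σ τ ∂μ) = _
      rw [h1, integral_indicator measurableSet_Iio]
      have h2 : μ.restrict (Iio τ) = μ.restrict (Iic τ) :=
        Measure.restrict_congr_set (ae_restrict_of_ae Iio_ae_eq_Iic)
      have h3 : μ.restrict (Iic τ) = volume.restrict (Ioc s τ) := by
        rw [hμdef, Measure.restrict_restrict measurableSet_Iic]
        congr 1
        ext σ
        constructor
        · intro hσ; exact ⟨hσ.2.1, hσ.1⟩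
        · intro hσ; exact ⟨hσ.2, hσ.1, hσ.2.trans hτ.2⟩
      rw [h2, h3, integral_inner (hf.mono_set (Ioc_subset_Icc_self.trans
        (Icc_subset_Icc le_rfl hτ.2))) (f τ)]
    rw [hB2, hswap, hA2]
  have hAval : A = 1 / 2 * ‖I‖ ^ 2 := by linarith
  exact hAval

/-- FTC for the squared distance to a fixed point, for an absolutely continuous curve
given as the integral of its a.e. derivative. -/
lemma norm_sq_sub_eq_integral_inner {x x' : ℝ → E} (c : E) {s t : ℝ} (hst : s ≤ t)
    (hint : IntegrableOn x' (Icc s t))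
    (hx : ∀ τ ∈ Icc s t, x τ = x s + ∫ σ in Ioc s τ, x' σ) :
    ‖x t - c‖ ^ 2 = ‖x s - c‖ ^ 2 + 2 * ∫ τ in Ioc s t, ⟪x' τ, x τ - c⟫ := by
  have hfμ : IntegrableOn x' (Ioc s t) := hint.mono_set Ioc_subset_Icc_self
  set I := ∫ σ in Ioc s t, x' σ with hIdef
  have hsplit : (∫ τ in Ioc s t, ⟪x' τ, x τ - c⟫)
      = (∫ τ in Ioc s t, ⟪x s - c, x' τ⟫) + ∫ τ in Ioc s t, ⟪x' τ, ∫ σ in Ioc s τ, x' σ⟫ := by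
    rw [← integral_add (hfμ.const_inner (x s - c)) (integrable_inner_primitive hint)]
    refine setIntegral_congr_fun measurableSet_Ioc fun τ hτ => ?_
    rw [hx τ (Ioc_subset_Icc_self hτ)]
    have : x s + (∫ σ in Ioc s τ, x' σ) - c = (x s - c) + ∫ σ in Ioc s τ, x' σ := by abel
    rw [this, inner_add_right, real_inner_comm (x' τ) (x s - c)]
  have hxt : x t - c = (x s - c) + I := by
    rw [hx t ⟨hst, le_rfl⟩, hIdef]; abel
  rw [hsplit, integral_inner hfμ (x s - c), fubini_half hst hint, hxt, ← hIdef,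
    norm_add_sq_real]
  ring

end Aux

set_option maxHeartbeats 1000000 in
theorem tracking_performance
    {n : ℕ} (x x' xstar : ℝ → EuclideanSpace ℝ (Fin n)) (a ℓ : ℝ)
    (ha : 0 < a) (hℓ : 0 ≤ ℓ)
    (hlip : ∀ s ∈ Set.Ici (0:ℝ), ∀ t ∈ Set.Ici (0:ℝ),
      ‖xstar t - xstar s‖ ≤ ℓ * |t - s|)
    (hcont : ContinuousOn x (Set.Ici 0))
    (hint : ∀ T : ℝ, IntegrableOn x' (Set.Icc 0 T))
    (hftc : ∀ t ∈ Set.Ici (0:ℝ), x t = x 0 + ∫ τ in (0:ℝ)..t, x' τ)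
    (hderiv : ∀ᵐ t ∂(volume.restrict (Set.Ici (0:ℝ))), HasDerivAt x (x' t) t)
    (hineq : ∀ᵐ t ∂(volume.restrict (Set.Ici (0:ℝ))),
      inner ℝ (x' t) (x t - xstar t) ≤ -a * ‖x t - xstar t‖ ^ 2) :
    Filter.limsup (fun t => ‖x t - xstar t‖) Filter.atTop ≤ ℓ / a ∧
    (‖x 0 - xstar 0‖ ≤ ℓ / a → ∀ t, 0 ≤ t → ‖x t - xstar t‖ ≤ ℓ / a) := by
  have hb0 : 0 ≤ ℓ / a := div_nonneg hℓ ha.le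
  have hxstar_cont : ContinuousOn xstar (Set.Ici 0) := by
    have hL : LipschitzOnWith (Real.toNNReal ℓ) xstar (Set.Ici 0) := by
      refine LipschitzOnWith.of_dist_le_mul fun u hu v hv => ?_
      rw [dist_eq_norm]
      calc ‖xstar u - xstar v‖ ≤ ℓ * |u - v| := hlip v hv u hu
        _ = (Real.toNNReal ℓ : ℝ) * dist u v := by
            rw [Real.coe_toNNReal ℓ hℓ, Real.dist_eq]
    exact hL.continuousOn
  have hrcont : ContinuousOn (fun τ => ‖x τ - xstar τ‖) (Set.Ici 0) :=
    (hcont.sub hxstar_cont).norm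
  have hIntOn : ∀ s v : ℝ, 0 ≤ s → IntegrableOn x' (Set.Icc s v) := fun s v h0s =>
    (hint v).mono_set (Set.Icc_subset_Icc_left h0s)
  have hxrep : ∀ s : ℝ, 0 ≤ s → ∀ τ, s ≤ τ → x τ = x s + ∫ σ in Set.Ioc s τ, x' σ := by
    intro s h0s τ hsτ
    have h0τ : 0 ≤ τ := h0s.trans hsτ
    have h1 : IntervalIntegrable x' volume 0 τ := by
      rw [intervalIntegrable_iff_integrableOn_Ioc_of_le h0τ]
      exact (hint τ).mono_set Set.Ioc_subset_Icc_self
    have h2 : IntervalIntegrable x' volume 0 s := by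
      rw [intervalIntegrable_iff_integrableOn_Ioc_of_le h0s]
      exact (hint s).mono_set Set.Ioc_subset_Icc_self
    have hsub := intervalIntegral.integral_interval_sub_left h1 h2
    rw [hftc τ (Set.mem_Ici.2 h0τ), hftc s (Set.mem_Ici.2 h0s),
      ← intervalIntegral.integral_of_le hsτ, ← hsub]
    abel
  have hkey : ∀ s v : ℝ, 0 ≤ s → s ≤ v →
      ‖x v - xstar s‖ ^ 2 ≤ ‖x s - xstar s‖ ^ 2
        + 2 * ∫ τ in Set.Ioc s v,
            ((-a) * ‖x τ - xstar τ‖ ^ 2 + (ℓ * (v - s)) * ‖x' τ‖) := by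
    intro s v h0s hsv
    have hIccsub : Set.Icc s v ⊆ Set.Ici 0 := fun τ hτ => h0s.trans hτ.1
    have hId := norm_sq_sub_eq_integral_inner (xstar s) hsv (hIntOn s v h0s)
      (fun τ hτ => hxrep s h0s τ hτ.1)
    rw [hId]
    have hfμ : IntegrableOn x' (Set.Ioc s v) :=
      (hIntOn s v h0s).mono_set Set.Ioc_subset_Icc_self
    have hxb : ContinuousOn (fun τ => x τ - xstar s) (Set.Icc s v) :=
      (hcont.mono hIccsub).sub continuousOn_const
    obtain ⟨M, hM⟩ := isCompact_Icc.exists_bound_of_continuousOn hxb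
    have hLint : IntegrableOn (fun τ => ⟪x' τ, x τ - xstar s⟫) (Set.Ioc s v) := by
      refine Integrable.mono' (hfμ.norm.mul_const M)
        (hfμ.aestronglyMeasurable.inner
          ((hxb.mono Set.Ioc_subset_Icc_self).aestronglyMeasurable measurableSet_Ioc)) ?_
      filter_upwards [ae_restrict_mem measurableSet_Ioc] with τ hτ
      calc ‖⟪x' τ, x τ - xstar s⟫‖ ≤ ‖x' τ‖ * ‖x τ - xstar s‖ := norm_inner_le_norm _ _
        _ ≤ ‖x' τ‖ * M :=
            mul_le_mul_of_nonneg_left (hM τ (Set.Ioc_subset_Icc_self hτ)) (norm_nonneg _)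
    have hRint : IntegrableOn
        (fun τ => (-a) * ‖x τ - xstar τ‖ ^ 2 + (ℓ * (v - s)) * ‖x' τ‖) (Set.Ioc s v) := by
      refine Integrable.add ?_ (hfμ.norm.const_mul _)
      refine Integrable.const_mul ?_ _
      exact (((hrcont.mono hIccsub).pow 2).integrableOn_Icc).mono_set Set.Ioc_subset_Icc_self
    have hmono : (∫ τ in Set.Ioc s v, ⟪x' τ, x τ - xstar s⟫)
        ≤ ∫ τ in Set.Ioc s v,
            ((-a) * ‖x τ - xstar τ‖ ^ 2 + (ℓ * (v - s)) * ‖x' τ‖) := by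
      refine integral_mono_ae hLint hRint ?_
      have hsub : Set.Ioc s v ⊆ Set.Ici (0:ℝ) := fun τ hτ => (h0s.trans hτ.1.le)
      filter_upwards [ae_restrict_of_ae_restrict_of_subset hsub hineq,
        ae_restrict_mem measurableSet_Ioc] with τ hineqτ hτ
      have hsplit2 : ⟪x' τ, x τ - xstar s⟫
          = ⟪x' τ, x τ - xstar τ⟫ + ⟪x' τ, xstar τ - xstar s⟫ := by
        rw [← inner_add_right]
        congr 1
        abel
      have h2 : ⟪x' τ, xstar τ - xstar s⟫ ≤ ‖x' τ‖ * (ℓ * (v - s)) := by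
        calc ⟪x' τ, xstar τ - xstar s⟫ ≤ ‖x' τ‖ * ‖xstar τ - xstar s‖ :=
              real_inner_le_norm _ _
          _ ≤ ‖x' τ‖ * (ℓ * |τ - s|) :=
              mul_le_mul_of_nonneg_left
                (hlip s (Set.mem_Ici.2 h0s) τ (Set.mem_Ici.2 (h0s.trans hτ.1.le)))
                (norm_nonneg _)
          _ ≤ ‖x' τ‖ * (ℓ * (v - s)) := by
              refine mul_le_mul_of_nonneg_left ?_ (norm_nonneg _)
              rw [abs_of_nonneg (by linarith [hτ.1.le] : (0:ℝ) ≤ τ - s)]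
              exact mul_le_mul_of_nonneg_left (by linarith [hτ.2]) hℓ
      have h1 : ⟪x' τ, x τ - xstar τ⟫ ≤ -a * ‖x τ - xstar τ‖ ^ 2 := hineqτ
      rw [hsplit2]
      nlinarith [h1, h2]
    linarith
  -- Dini-type right derivative estimate
  have hdini : ∀ s : ℝ, 0 ≤ s → 0 < ‖x s - xstar s‖ → ∀ K : ℝ,
      ℓ - a * ‖x s - xstar s‖ < K →
      ∀ᶠ v in 𝓝[>] s, ‖x v - xstar v‖ ≤ ‖x s - xstar s‖ + (v - s) * K := by
    intro s h0s hrs K hK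
    set rs := ‖x s - xstar s‖ with hrsdef
    -- choose δ > 0 small
    have hcontg : ContinuousAt (fun δ : ℝ => ℓ * rs + ℓ * δ - a * (rs - δ) ^ 2 - K * rs) 0 := by
      fun_prop
    have hg0 : ℓ * rs + ℓ * 0 - a * (rs - 0) ^ 2 - K * rs < 0 := by nlinarith
    have hev : ∀ᶠ δ in 𝓝 (0:ℝ),
        ℓ * rs + ℓ * δ - a * (rs - δ) ^ 2 - K * rs < 0 ∧ δ < rs := by
      refine (hcontg.eventually_lt_const ?_).and (eventually_lt_nhds hrs)
      simpa using hg0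
    obtain ⟨δ, hδ, hδpos⟩ :=
      ((hev.filter_mono (nhdsWithin_le_nhds (s := Set.Ioi (0:ℝ)))).and
        eventually_mem_nhdsWithin).exists
    obtain ⟨harith, hδrs⟩ := hδ
    rw [Set.mem_Ioi] at hδpos
    -- neighborhood where r τ > rs - δ and the primitive of ‖x'‖ is < δ
    have htd : Tendsto (fun τ => ‖x τ - xstar τ‖) (𝓝[>] s) (𝓝 rs) := by
      have h1 : 𝓝[>] s ≤ 𝓝[Set.Ici (0:ℝ)] s :=
        nhdsWithin_le_of_mem (mem_of_superset self_mem_nhdsWithin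
          (fun τ hτ => le_of_lt (lt_of_le_of_lt h0s hτ)))
      exact (hrcont s (Set.mem_Ici.2 h0s)).mono_left h1
    have hev1 : ∀ᶠ τ in 𝓝[>] s, rs - δ < ‖x τ - xstar τ‖ :=
      htd.eventually (eventually_gt_nhds (by linarith))
    have hev2 : ∀ᶠ v in 𝓝[>] s, (∫ σ in Set.Ioc s v, ‖x' σ‖) < δ := by
      have hP : ContinuousOn (fun v => ∫ σ in Set.Ioc s v, ‖x' σ‖) (Set.Icc s (s + 1)) :=
        intervalIntegral.continuousOn_primitive (hIntOn s (s + 1) h0s).norm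
      have hP0 : Tendsto (fun v => ∫ σ in Set.Ioc s v, ‖x' σ‖) (𝓝[>] s) (𝓝 0) := by
        have h2 : 𝓝[>] s ≤ 𝓝[Set.Icc s (s + 1)] s := by
          refine nhdsWithin_le_of_mem ?_
          refine mem_of_superset (Ioo_mem_nhdsGT_of_mem ⟨le_rfl, lt_add_of_pos_right s one_pos⟩) ?_
          exact fun τ hτ => ⟨hτ.1.le, hτ.2.le⟩
        have := (hP s (Set.left_mem_Icc.2 (le_add_of_nonneg_right zero_le_one))).mono_left h2
        simpa using this
      exact hP0.eventually (eventually_lt_nhds hδpos)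
    -- get an interval
    obtain ⟨u, hu, hsub⟩ := mem_nhdsGT_iff_exists_Ioo_subset.1
      ((hev1.and hev2).filter_mono le_rfl : _ ∈ 𝓝[>] s)
    rw [Set.mem_Ioi] at hu
    filter_upwards [Ioo_mem_nhdsGT_of_mem ⟨le_rfl, hu⟩] with v hv
    obtain ⟨hsv, hvu⟩ := hv
    -- apply hkey
    have hkv := hkey s v h0s hsv.le
    -- bound the integral
    have hIb : (∫ τ in Set.Ioc s v, ((-a) * ‖x τ - xstar τ‖ ^ 2 + (ℓ * (v - s)) * ‖x' τ‖))
        ≤ (v - s) * ((-a) * (rs - δ) ^ 2) + (ℓ * (v - s)) * δ := by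
      have hint1 : IntegrableOn (fun τ => (-a) * ‖x τ - xstar τ‖ ^ 2) (Set.Ioc s v) := by
        refine Integrable.const_mul ?_ _
        have hIccsub : Set.Icc s v ⊆ Set.Ici (0:ℝ) := fun τ hτ => h0s.trans hτ.1
        exact (((hrcont.mono hIccsub).pow 2).integrableOn_Icc).mono_set Set.Ioc_subset_Icc_self
      have hint2 : IntegrableOn (fun τ => (ℓ * (v - s)) * ‖x' τ‖) (Set.Ioc s v) :=
        ((hIntOn s v h0s).mono_set Set.Ioc_subset_Icc_self).norm.const_mul _
      rw [integral_add hint1 hint2]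
      have hb1 : (∫ τ in Set.Ioc s v, (-a) * ‖x τ - xstar τ‖ ^ 2)
          ≤ (v - s) * ((-a) * (rs - δ) ^ 2) := by
        have : (∫ τ in Set.Ioc s v, (-a) * ‖x τ - xstar τ‖ ^ 2)
            ≤ ∫ _ in Set.Ioc s v, (-a) * (rs - δ) ^ 2 := by
          refine setIntegral_mono_on hint1 ((integrableOn_const_iff (by finiteness)).2 (Or.inr ?_))
            measurableSet_Ioc ?_
          · rw [Real.volume_Ioc]; exact ENNReal.ofReal_lt_top
          · intro τ hτ
            have hτmem : τ ∈ Set.Ioo s u := ⟨hτ.1, lt_of_le_of_lt hτ.2 hvu⟩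
            have hrτ := (hsub hτmem).1
            have h1 : 0 ≤ rs - δ := by linarith
            have h2 : (rs - δ) ^ 2 ≤ ‖x τ - xstar τ‖ ^ 2 := by nlinarith
            nlinarith [ha]
        rw [setIntegral_const] at this
        rw [Real.volume_real_Ioc_of_le (by linarith : s ≤ v)] at this
        simpa [smul_eq_mul] using this
      have hb2 : (∫ τ in Set.Ioc s v, (ℓ * (v - s)) * ‖x' τ‖) ≤ (ℓ * (v - s)) * δ := by
        rw [integral_const_mul]
        have hPv : (∫ σ in Set.Ioc s v, ‖x' σ‖) < δ := (hsub ⟨hsv, hvu⟩).2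
        have hlvs : 0 ≤ ℓ * (v - s) := mul_nonneg hℓ (by linarith)
        exact mul_le_mul_of_nonneg_left hPv.le hlvs
      linarith
    -- combine: squared bound
    have hY : ‖x v - xstar s‖ ^ 2 ≤ rs ^ 2 + 2 * (v - s) * ((K - ℓ) * rs) := by
      have harith2 : (-a) * (rs - δ) ^ 2 + ℓ * δ ≤ (K - ℓ) * rs := by nlinarith
      have hvs0 : (0:ℝ) ≤ v - s := by linarith
      have h4 : (v - s) * ((-a) * (rs - δ) ^ 2) + (ℓ * (v - s)) * δ
          ≤ (v - s) * ((K - ℓ) * rs) := by nlinarith [mul_le_mul_of_nonneg_left harith2 hvs0]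
      have h5 : ‖x s - xstar s‖ ^ 2 = rs ^ 2 := by rw [hrsdef]
      linarith [hkv, hIb, h4]
    have hW : ‖x v - xstar s‖ ≤ rs + (v - s) * (K - ℓ) := by
      set W := ‖x v - xstar s‖ with hWdef
      have hW0 : 0 ≤ W := norm_nonneg _
      nlinarith [sq_nonneg (W - rs), hY, hrs]
    have htri : ‖x v - xstar v‖ ≤ ‖x v - xstar s‖ + ℓ * (v - s) := by
      have h3 : ‖xstar v - xstar s‖ ≤ ℓ * (v - s) := by
        have := hlip s (Set.mem_Ici.2 h0s) v (Set.mem_Ici.2 (by linarith))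
        rwa [abs_of_nonneg (by linarith : (0:ℝ) ≤ v - s)] at this
      calc ‖x v - xstar v‖ = ‖(x v - xstar s) - (xstar v - xstar s)‖ := by
            congr 1; abel
        _ ≤ ‖x v - xstar s‖ + ‖xstar v - xstar s‖ := norm_sub_le _ _
        _ ≤ ‖x v - xstar s‖ + ℓ * (v - s) := by linarith
    calc ‖x v - xstar v‖ ≤ ‖x v - xstar s‖ + ℓ * (v - s) := htri
      _ ≤ rs + (v - s) * (K - ℓ) + ℓ * (v - s) := by linarith
      _ = rs + (v - s) * K := by ring
  -- invariance of the ball of radius ℓ/a + ε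
  have hC : ∀ ε : ℝ, 0 < ε → ∀ s : ℝ, 0 ≤ s → ∀ t : ℝ, s ≤ t →
      ‖x s - xstar s‖ ≤ ℓ / a + ε → ‖x t - xstar t‖ ≤ ℓ / a + ε := by
    intro ε hε s h0s t hst hs
    by_contra hcon
    push_neg at hcon
    have hA0 : 0 < ℓ / a + ε := by linarith
    set S := {τ | τ ∈ Set.Icc s t ∧ ‖x τ - xstar τ‖ ≤ ℓ / a + ε} with hSdef
    have hSne : S.Nonempty := ⟨s, ⟨le_rfl, hst⟩, hs⟩
    have hSbdd : BddAbove S := ⟨t, fun τ hτ => hτ.1.2⟩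
    have hSclosed : IsClosed S := by
      have hSeq : S = Set.Icc s t ∩ (fun τ => ‖x τ - xstar τ‖) ⁻¹' (Set.Iic (ℓ / a + ε)) := by
        ext τ
        simp only [hSdef, Set.mem_setOf_eq, Set.mem_inter_iff, Set.mem_preimage, Set.mem_Iic]
      rw [hSeq]
      exact (hrcont.mono (fun τ hτ => h0s.trans hτ.1)).preimage_isClosed_of_isClosed
        isClosed_Icc isClosed_Iic
    set u := sSup S with hudef
    have huS : u ∈ S := hSclosed.csSup_mem hSne hSbdd
    have h0u : 0 ≤ u := h0s.trans huS.1.1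
    have hut : u ≤ t := huS.1.2
    have hult : u < t :=
      lt_of_le_of_ne hut (fun h => absurd (h ▸ huS.2) (not_le.2 hcon))
    have hgt : ∀ τ, u < τ → τ ≤ t → ℓ / a + ε < ‖x τ - xstar τ‖ := by
      intro τ huτ hτt
      by_contra hh
      push_neg at hh
      have hτS : τ ∈ S := ⟨⟨huS.1.1.trans huτ.le, hτt⟩, hh⟩
      exact absurd (le_csSup hSbdd hτS) (not_le.2 huτ)
    have hruA : ‖x u - xstar u‖ = ℓ / a + ε := by
      refine le_antisymm huS.2 ?_
      have htd : Tendsto (fun τ => ‖x τ - xstar τ‖) (𝓝[>] u) (𝓝 (‖x u - xstar u‖)) := by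
        have h1 : 𝓝[>] u ≤ 𝓝[Set.Ici (0:ℝ)] u :=
          nhdsWithin_le_of_mem (mem_of_superset self_mem_nhdsWithin
            (fun τ hτ => le_of_lt (lt_of_le_of_lt h0u hτ)))
        exact (hrcont u (Set.mem_Ici.2 h0u)).mono_left h1
      refine ge_of_tendsto htd ?_
      filter_upwards [Ioo_mem_nhdsGT_of_mem ⟨le_rfl, hult⟩] with τ hτ
      exact (hgt τ hτ.1 hτ.2.le).le
    have hrupos : 0 < ‖x u - xstar u‖ := by rw [hruA]; exact hA0
    have haℓ : a * (ℓ / a) = ℓ := by field_simp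
    have hKlt : ℓ - a * ‖x u - xstar u‖ < -(a * ε) / 2 := by
      rw [hruA]
      nlinarith [ha, hε]
    have hdu := hdini u h0u hrupos (-(a * ε) / 2) hKlt
    obtain ⟨v, hv1, hv2⟩ :=
      (hdu.and (Ioo_mem_nhdsGT_of_mem ⟨le_rfl, hult⟩ :
        Set.Ioo u t ∈ 𝓝[>] u)).exists
    have h6 : (v - u) * (-(a * ε) / 2) < 0 :=
      mul_neg_of_pos_of_neg (by linarith [hv2.1]) (by nlinarith [ha, hε])
    have h7 : ‖x v - xstar v‖ < ℓ / a + ε := by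
      calc ‖x v - xstar v‖ ≤ ‖x u - xstar u‖ + (v - u) * (-(a * ε) / 2) := hv1
        _ < ‖x u - xstar u‖ := by linarith
        _ = ℓ / a + ε := hruA
    exact absurd (hgt v hv2.1 hv2.2.le) (not_lt.2 h7.le)
  -- Part 2: invariance from time 0
  have hB : ‖x 0 - xstar 0‖ ≤ ℓ / a → ∀ t, 0 ≤ t → ‖x t - xstar t‖ ≤ ℓ / a := by
    intro h0 t ht
    refine le_of_forall_pos_le_add fun ε hε => ?_
    exact hC ε hε 0 le_rfl t ht (by linarith)
  -- reachability of the ball via Grönwall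
  have hreach : ∀ ε : ℝ, 0 < ε → ∃ T : ℝ, 0 ≤ T ∧ ‖x T - xstar T‖ ≤ ℓ / a + ε := by
    intro ε hε
    by_contra hcon
    push_neg at hcon
    have hrpos : ∀ τ : ℝ, 0 ≤ τ → 0 < ‖x τ - xstar τ‖ := fun τ hτ =>
      lt_of_le_of_lt (by positivity) (hcon τ hτ)
    have hg : ∀ T : ℝ, 0 ≤ T → ‖x T - xstar T‖
        ≤ gronwallBound (‖x 0 - xstar 0‖) (-a) ℓ T := by
      intro T hT
      have hf' : ∀ τ ∈ Set.Ico (0:ℝ) T, ∀ ρ : ℝ,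
          (fun τ => ℓ - a * ‖x τ - xstar τ‖) τ < ρ →
          ∃ᶠ z in 𝓝[>] τ, (z - τ)⁻¹ * (‖x z - xstar z‖ - ‖x τ - xstar τ‖) < ρ := by
        intro τ hτ ρ hρ
        simp only at hρ
        have h1 := hdini τ hτ.1 (hrpos τ hτ.1)
          ((ℓ - a * ‖x τ - xstar τ‖ + ρ) / 2) (by linarith)
        refine ((h1.and eventually_mem_nhdsWithin).mono ?_).frequently
        rintro z ⟨hz1, hz2⟩
        rw [Set.mem_Ioi] at hz2
        have hzu : 0 < z - τ := by linarith
        have h2 : ‖x z - xstar z‖ - ‖x τ - xstar τ‖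
            ≤ (z - τ) * ((ℓ - a * ‖x τ - xstar τ‖ + ρ) / 2) := by linarith
        calc (z - τ)⁻¹ * (‖x z - xstar z‖ - ‖x τ - xstar τ‖)
            ≤ (z - τ)⁻¹ * ((z - τ) * ((ℓ - a * ‖x τ - xstar τ‖ + ρ) / 2)) :=
              mul_le_mul_of_nonneg_left h2 (inv_nonneg.2 hzu.le)
          _ = (ℓ - a * ‖x τ - xstar τ‖ + ρ) / 2 := by field_simp
          _ < ρ := by linarith
      have hbound : ∀ τ ∈ Set.Ico (0:ℝ) T,
          (fun τ => ℓ - a * ‖x τ - xstar τ‖) τ ≤ -a * ‖x τ - xstar τ‖ + ℓ :=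
        fun τ _ => le_of_eq (by ring)
      have hres := le_gronwallBound_of_liminf_deriv_right_le
        (hrcont.mono fun τ hτ => hτ.1) hf' le_rfl hbound T ⟨hT, le_rfl⟩
      simpa using hres
    have h8 : Tendsto (fun T : ℝ => -(a * T)) atTop atBot := by
      have hmul : Tendsto (fun T : ℝ => a * T) atTop atTop :=
        Tendsto.const_mul_atTop ha tendsto_id
      simpa [Function.comp_def] using tendsto_neg_atTop_atBot.comp hmul
    have hexp : Tendsto (fun T : ℝ => Real.exp (-a * T)) atTop (𝓝 0) := by
      simpa [Function.comp_def] using Real.tendsto_exp_atBot.comp h8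
    have hgb : Tendsto (fun T => gronwallBound (‖x 0 - xstar 0‖) (-a) ℓ T) atTop
        (𝓝 (ℓ / a)) := by
      rw [gronwallBound_of_K_ne_0 (neg_ne_zero.2 ha.ne')]
      have ht1 : Tendsto
          (fun T : ℝ => ‖x 0 - xstar 0‖ * Real.exp (-a * T)
            + ℓ / -a * (Real.exp (-a * T) - 1)) atTop
          (𝓝 (‖x 0 - xstar 0‖ * 0 + ℓ / -a * (0 - 1))) :=
        (hexp.const_mul _).add ((hexp.sub_const 1).const_mul _)
      have h9 : ‖x 0 - xstar 0‖ * 0 + ℓ / -a * (0 - 1) = ℓ / a := by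
        field_simp
        ring
      rwa [h9] at ht1
    obtain ⟨T, hT1, hT0⟩ :=
      ((hgb.eventually (eventually_lt_nhds (by linarith : ℓ / a < ℓ / a + ε))).and
        (eventually_ge_atTop (0:ℝ))).exists
    have := lt_of_le_of_lt (hg T hT0) hT1
    exact absurd this (not_lt.2 (hcon T hT0).le)
  -- limsup bound
  have hlimsup : Filter.limsup (fun t => ‖x t - xstar t‖) Filter.atTop ≤ ℓ / a := by
    refine le_of_forall_pos_le_add fun ε hε => ?_
    obtain ⟨T, hT0, hT⟩ := hreach ε hε
    refine Filter.limsup_le_of_le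
      (Filter.isCoboundedUnder_le_of_le Filter.atTop (fun τ => norm_nonneg _)) ?_
    filter_upwards [eventually_ge_atTop T] with τ hτ
    exact hC ε hε T hT0 τ hτ hT
  exact ⟨hlimsup, hB⟩
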